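/- Let F¹² be the 3×3 matrix with rows (0,0,0), (0,1,0), (0,0,1); F¹³ the matrix with rows (0,0,0), (0,0,1), (0,1,0); and F²³ the matrix with rows (0,0,0), (0,1,1), (0,−1,1). Each of these has rank 2, the vector e = (1,0,0) satisfies F^{ij} e = 0 and (F^{ij})ᵀ e = 0 for all three matrices (so all epipoles equal (1,0,0)), and the triple-wise equations (e₁³)ᵀ F¹² e₂³ = (e₁²)ᵀ F¹³ e₃² = (e₂¹)ᵀ F²³ e₃¹ = 0 hold. Nevertheless, the triple {F¹², F¹³, F²³} is NOT compatible: there exist no cameras P₁, P₂, P₃ and nonzero scalars λ_{ij} with λ_{ij} F^{ij} = ψ(Pᵢ,Pⱼ) for all i < j. -/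

import Mathlib

open Matrix

/-- The 6×6 matrix whose first three rows form the block `[P₁ | x | 0]` and whose last
three rows form the block `[P₂ | 0 | y]`. -/
noncomputable def bigMat (P₁ P₂ : Matrix (Fin 3) (Fin 4) ℝ) (x y : Fin 3 → ℝ) :
    Matrix (Fin 6) (Fin 6) ℝ :=
  fun i j =>
    if hi : (i : ℕ) < 3 then
      if hj : (j : ℕ) < 4 then P₁ ⟨(i : ℕ), hi⟩ ⟨(j : ℕ), hj⟩
      else if (j : ℕ) = 4 then x ⟨(i : ℕ), hi⟩ else 0
    else
      if hj : (j : ℕ) < 4 then P₂ ⟨(i : ℕ) - 3, by have := i.isLt; omega⟩ ⟨(j : ℕ), hj⟩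
      else if (j : ℕ) = 4 then 0
      else y ⟨(i : ℕ) - 3, by have := i.isLt; omega⟩

/-- `psi P₁ P₂` is the unique 3×3 matrix `F` such that for all `x y : ℝ³`,
`xᵀ F y = det [P₁ | x | 0; P₂ | 0 | y]`.  (Since the determinant is bilinear in `(x, y)`,
this matrix is obtained by evaluating at pairs of standard basis vectors.) -/
noncomputable def psi (P₁ P₂ : Matrix (Fin 3) (Fin 4) ℝ) : Matrix (Fin 3) (Fin 3) ℝ :=
  fun a b => (bigMat P₁ P₂ (Pi.single a 1) (Pi.single b 1)).det

/-- A camera is a real 3×4 matrix of rank 3. -/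
def IsCamera (P : Matrix (Fin 3) (Fin 4) ℝ) : Prop := P.rank = 3

/- ### Auxiliary lemmas -/

lemma urow_comm (M : Matrix (Fin 6) (Fin 6) ℝ) {i j : Fin 6} (h : i ≠ j) (r s : Fin 6 → ℝ) :
    (M.updateRow i r).updateRow j s = (M.updateRow j s).updateRow i r := by
  ext a b
  rcases eq_or_ne a i with rfl | hai <;> rcases eq_or_ne a j with rfl | haj <;>
    simp_all [updateRow_apply]

lemma expand1 (M : Matrix (Fin 6) (Fin 6) ℝ) (i : Fin 6) (r : Fin 6 → ℝ) (c : ℝ)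
    (w : Fin 6 → ℝ) (h : r = M i + c • w) :
    (M.updateRow i r).det = M.det + c * (M.updateRow i w).det := by
  rw [h, det_updateRow_add, det_updateRow_smul, updateRow_eq_self]

lemma det_two_w (M : Matrix (Fin 6) (Fin 6) ℝ) {i j : Fin 6} (h : i ≠ j) (w : Fin 6 → ℝ) :
    ((M.updateRow i w).updateRow j w).det = 0 :=
  det_zero_of_row_eq h (by simp [updateRow_apply, h, h.symm])

lemma expand3 (M : Matrix (Fin 6) (Fin 6) ℝ) (i₀ i₁ i₂ : Fin 6)
    (h01 : i₀ ≠ i₁) (h02 : i₀ ≠ i₂) (h12 : i₁ ≠ i₂)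
    (c₀ c₁ c₂ : ℝ) (w : Fin 6 → ℝ) :
    (((M.updateRow i₀ (M i₀ + c₀ • w)).updateRow i₁ (M i₁ + c₁ • w)).updateRow i₂
        (M i₂ + c₂ • w)).det
      = M.det + c₀ * (M.updateRow i₀ w).det + c₁ * (M.updateRow i₁ w).det
        + c₂ * (M.updateRow i₂ w).det := by
  set r₀ := M i₀ + c₀ • w
  set r₁ := M i₁ + c₁ • w
  set A := (M.updateRow i₀ r₀).updateRow i₁ r₁ with hA
  have e2 : ((A.updateRow i₂ (M i₂ + c₂ • w))).det = A.det + c₂ * (A.updateRow i₂ w).det := by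
    refine expand1 _ _ _ _ _ ?_
    rw [hA, updateRow_ne h12.symm, updateRow_ne h02.symm]
  have eB : ((M.updateRow i₀ r₀).updateRow i₁ w).det = (M.updateRow i₁ w).det := by
    rw [urow_comm _ h01]
    rw [expand1 (M.updateRow i₁ w) i₀ r₀ c₀ w (by rw [updateRow_ne h01]),
      det_two_w _ h01.symm]
    ring
  have eA : A.det = M.det + c₀ * (M.updateRow i₀ w).det + c₁ * (M.updateRow i₁ w).det := by
    rw [hA, expand1 (M.updateRow i₀ r₀) i₁ r₁ c₁ w (by rw [updateRow_ne h01.symm]),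
      expand1 M i₀ r₀ c₀ w rfl, eB]
  have eD : (A.updateRow i₂ w).det = (M.updateRow i₂ w).det := by
    rw [hA, urow_comm _ h12, urow_comm _ h02]
    set X := M.updateRow i₂ w with hX
    rw [expand1 (X.updateRow i₀ r₀) i₁ r₁ c₁ w
        (by rw [updateRow_ne h01.symm, hX, updateRow_ne h12]),
      expand1 X i₀ r₀ c₀ w (by rw [hX, updateRow_ne h02])]
    have z1 : ((X.updateRow i₀ r₀).updateRow i₁ w).det = 0 := by
      refine det_zero_of_row_eq h12 ?_
      rw [updateRow_self, updateRow_ne h12.symm, updateRow_ne h02.symm, hX, updateRow_self]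
    have z2 : (X.updateRow i₀ w).det = 0 := by
      rw [hX]
      rw [← urow_comm _ h02]
      exact det_two_w _ h02 w
    rw [z1, z2]; ring
  rw [e2, eA, eD]

/-- The indicator row used in the `x`-slot (entry `1` in column 4). -/
noncomputable def wx : Fin 6 → ℝ := fun j => if j = 4 then 1 else 0

/-- The indicator row used in the `y`-slot (entry `1` in column 5). -/
noncomputable def wy : Fin 6 → ℝ := fun j => if j = 5 then 1 else 0

lemma bigMat_x_decomp (P Q : Matrix (Fin 3) (Fin 4) ℝ) (x y : Fin 3 → ℝ) :
    bigMat P Q x y =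
      (((bigMat P Q 0 y).updateRow 0 ((bigMat P Q 0 y) 0 + x 0 • wx)).updateRow 1
          ((bigMat P Q 0 y) 1 + x 1 • wx)).updateRow 2 ((bigMat P Q 0 y) 2 + x 2 • wx) := by
  ext i j
  fin_cases i <;> fin_cases j <;>
    simp [bigMat, wx, updateRow_apply, show ((0:Fin 6):ℕ) = 0 from rfl, show ((1:Fin 6):ℕ) = 1 from rfl, show ((2:Fin 6):ℕ) = 2 from rfl, show ((3:Fin 6):ℕ) = 3 from rfl, show ((4:Fin 6):ℕ) = 4 from rfl, show ((5:Fin 6):ℕ) = 5 from rfl] <;> try norm_num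

lemma bigMat_y_decomp (P Q : Matrix (Fin 3) (Fin 4) ℝ) (x y : Fin 3 → ℝ) :
    bigMat P Q x y =
      (((bigMat P Q x 0).updateRow 3 ((bigMat P Q x 0) 3 + y 0 • wy)).updateRow 4
          ((bigMat P Q x 0) 4 + y 1 • wy)).updateRow 5 ((bigMat P Q x 0) 5 + y 2 • wy) := by
  ext i j
  fin_cases i <;> fin_cases j <;>
    simp [bigMat, wy, updateRow_apply, show ((0:Fin 6):ℕ) = 0 from rfl, show ((1:Fin 6):ℕ) = 1 from rfl, show ((2:Fin 6):ℕ) = 2 from rfl, show ((3:Fin 6):ℕ) = 3 from rfl, show ((4:Fin 6):ℕ) = 4 from rfl, show ((5:Fin 6):ℕ) = 5 from rfl] <;> try norm_num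

lemma det_bigMat_x0 (P Q : Matrix (Fin 3) (Fin 4) ℝ) (y : Fin 3 → ℝ) :
    (bigMat P Q 0 y).det = 0 := by
  refine det_eq_zero_of_column_eq_zero 4 fun i => ?_
  fin_cases i <;> simp [bigMat, show ((0:Fin 6):ℕ) = 0 from rfl, show ((1:Fin 6):ℕ) = 1 from rfl, show ((2:Fin 6):ℕ) = 2 from rfl, show ((3:Fin 6):ℕ) = 3 from rfl, show ((4:Fin 6):ℕ) = 4 from rfl, show ((5:Fin 6):ℕ) = 5 from rfl]

lemma det_bigMat_y0 (P Q : Matrix (Fin 3) (Fin 4) ℝ) (x : Fin 3 → ℝ) :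
    (bigMat P Q x 0).det = 0 := by
  refine det_eq_zero_of_column_eq_zero 5 fun i => ?_
  fin_cases i <;> simp [bigMat, show ((0:Fin 6):ℕ) = 0 from rfl, show ((1:Fin 6):ℕ) = 1 from rfl, show ((2:Fin 6):ℕ) = 2 from rfl, show ((3:Fin 6):ℕ) = 3 from rfl, show ((4:Fin 6):ℕ) = 4 from rfl, show ((5:Fin 6):ℕ) = 5 from rfl]

lemma detx (P Q : Matrix (Fin 3) (Fin 4) ℝ) (x y : Fin 3 → ℝ) :
    (bigMat P Q x y).det
      = x 0 * (bigMat P Q (Pi.single 0 1) y).det + x 1 * (bigMat P Q (Pi.single 1 1) y).det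
        + x 2 * (bigMat P Q (Pi.single 2 1) y).det := by
  have base : ∀ x' : Fin 3 → ℝ, (bigMat P Q x' y).det
      = x' 0 * ((bigMat P Q 0 y).updateRow 0 wx).det
        + x' 1 * ((bigMat P Q 0 y).updateRow 1 wx).det
        + x' 2 * ((bigMat P Q 0 y).updateRow 2 wx).det := by
    intro x'
    rw [bigMat_x_decomp P Q x' y,
      expand3 _ 0 1 2 (by decide) (by decide) (by decide) (x' 0) (x' 1) (x' 2) wx,
      det_bigMat_x0]
    ring
  rw [base x, base (Pi.single 0 1), base (Pi.single 1 1), base (Pi.single 2 1)]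
  simp [Pi.single_apply]
  try ring

lemma dety (P Q : Matrix (Fin 3) (Fin 4) ℝ) (x y : Fin 3 → ℝ) :
    (bigMat P Q x y).det
      = y 0 * (bigMat P Q x (Pi.single 0 1)).det + y 1 * (bigMat P Q x (Pi.single 1 1)).det
        + y 2 * (bigMat P Q x (Pi.single 2 1)).det := by
  have base : ∀ y' : Fin 3 → ℝ, (bigMat P Q x y').det
      = y' 0 * ((bigMat P Q x 0).updateRow 3 wy).det
        + y' 1 * ((bigMat P Q x 0).updateRow 4 wy).det
        + y' 2 * ((bigMat P Q x 0).updateRow 5 wy).det := by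
    intro y'
    rw [bigMat_y_decomp P Q x y',
      expand3 _ 3 4 5 (by decide) (by decide) (by decide) (y' 0) (y' 1) (y' 2) wy,
      det_bigMat_y0]
    try ring
  rw [base y, base (Pi.single 0 1), base (Pi.single 1 1), base (Pi.single 2 1)]
  simp [Pi.single_apply]
  try ring

/-- Bilinear expansion: `xᵀ ψ y` equals the 6×6 determinant. -/
lemma psi_expand (P Q : Matrix (Fin 3) (Fin 4) ℝ) (x y : Fin 3 → ℝ) :
    x ⬝ᵥ (psi P Q *ᵥ y) = (bigMat P Q x y).det := by
  rw [detx P Q x y, dety P Q (Pi.single 0 1) y, dety P Q (Pi.single 1 1) y,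
    dety P Q (Pi.single 2 1) y]
  simp only [psi, dotProduct, mulVec, Fin.sum_univ_three]
  ring

/-- The key alternating property: plugging `(Pu, Qu)` into the bilinear form gives `0`. -/
lemma psi_alt (P Q : Matrix (Fin 3) (Fin 4) ℝ) (u : Fin 4 → ℝ) :
    (P *ᵥ u) ⬝ᵥ (psi P Q *ᵥ (Q *ᵥ u)) = 0 := by
  rw [psi_expand]
  have : ∃ v ≠ 0, (bigMat P Q (P *ᵥ u) (Q *ᵥ u)) *ᵥ v = 0 := by
    refine ⟨fun j => if h : (j : ℕ) < 4 then u ⟨(j : ℕ), h⟩ else -1, ?_, ?_⟩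
    · intro h
      have := congrFun h 4
      norm_num [show ((4:Fin 6):ℕ) = 4 from rfl] at this
    · funext i
      fin_cases i <;>
        simp [bigMat, mulVec, dotProduct, Fin.sum_univ_six, Fin.sum_univ_four, show ((0:Fin 6):ℕ) = 0 from rfl, show ((1:Fin 6):ℕ) = 1 from rfl, show ((2:Fin 6):ℕ) = 2 from rfl, show ((3:Fin 6):ℕ) = 3 from rfl, show ((4:Fin 6):ℕ) = 4 from rfl, show ((5:Fin 6):ℕ) = 5 from rfl] <;> ring
  exact (Matrix.exists_mulVec_eq_zero_iff).mp this

open Submodule in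
lemma span_singleton_finrank_le (x : Fin 4 → ℝ) :
    Module.finrank ℝ (span ℝ ({x} : Set (Fin 4 → ℝ))) ≤ 1 := by
  rcases eq_or_ne x 0 with rfl | hx
  · rw [span_zero_singleton]; simp
  · rw [show span ℝ ({x} : Set (Fin 4 → ℝ)) = ℝ ∙ x from rfl, finrank_span_singleton hx]

open Submodule in
lemma rank_le_two_of_rows_in_span (P : Matrix (Fin 3) (Fin 4) ℝ) (v w : Fin 4 → ℝ)
    (h : ∀ k : Fin 3, P k ∈ span ℝ ({v, w} : Set (Fin 4 → ℝ))) : P.rank ≤ 2 := by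
  rw [← P.rank_transpose, Matrix.rank]
  have hr : LinearMap.range (Pᵀ).mulVecLin ≤ span ℝ ({v, w} : Set (Fin 4 → ℝ)) := by
    rw [Matrix.range_mulVecLin, span_le]
    rintro _ ⟨k, rfl⟩
    exact h k
  refine le_trans (Submodule.finrank_mono hr) ?_
  have : span ℝ ({v, w} : Set (Fin 4 → ℝ)) = span ℝ {v} ⊔ span ℝ {w} := by
    rw [Submodule.span_insert]
  rw [this]
  refine le_trans (Submodule.finrank_add_le_finrank_add_finrank _ _) ?_
  have h1 := span_singleton_finrank_le v
  have h2 := span_singleton_finrank_le w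
  omega

open Submodule in
lemma rows12_indep (P : Matrix (Fin 3) (Fin 4) ℝ) (h : P.rank = 3) :
    ∀ s t : ℝ, s • P 1 + t • P 2 = 0 → s = 0 ∧ t = 0 := by
  intro s t hst
  by_contra hne
  have hrank : P.rank ≤ 2 := by
    rcases eq_or_ne t 0 with rfl | ht
    · have hs : s ≠ 0 := by tauto
      have h1 : P 1 = 0 := by
        have h' : s • P 1 = 0 := by simpa using hst
        have := congrArg (fun z => s⁻¹ • z) h'
        simpa [smul_smul, inv_mul_cancel₀ hs] using this
      refine rank_le_two_of_rows_in_span P (P 0) (P 2) fun k => ?_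
      fin_cases k
      · exact subset_span (by simp)
      · show P 1 ∈ span ℝ {P 0, P 2}
        rw [h1]; exact zero_mem _
      · exact subset_span (by simp)
    · have h' : t • P 2 = (-s) • P 1 := by
        funext k
        have := congrFun hst k
        simp only [Pi.add_apply, Pi.smul_apply, smul_eq_mul, Pi.zero_apply, neg_smul] at this ⊢
        linarith
      have h2 : P 2 = (t⁻¹ * (-s)) • P 1 := by
        calc P 2 = t⁻¹ • (t • P 2) := by rw [smul_smul, inv_mul_cancel₀ ht, one_smul]
        _ = t⁻¹ • ((-s) • P 1) := by rw [h']
        _ = (t⁻¹ * (-s)) • P 1 := smul_smul _ _ _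
      refine rank_le_two_of_rows_in_span P (P 0) (P 1) fun k => ?_
      fin_cases k
      · exact subset_span (by simp)
      · exact subset_span (by simp)
      · show P 2 ∈ span ℝ {P 0, P 1}
        rw [h2]; exact smul_mem _ _ (subset_span (by simp))
  rw [h] at hrank; omega

lemma dual_exists (a b : Fin 4 → ℝ)
    (h : ∀ s t : ℝ, s • a + t • b = 0 → s = 0 ∧ t = 0) :
    ∃ u₀ u₁ : Fin 4 → ℝ, a ⬝ᵥ u₀ = 1 ∧ b ⬝ᵥ u₀ = 0 ∧ a ⬝ᵥ u₁ = 0 ∧ b ⬝ᵥ u₁ = 1 := by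
  set g : ℝ := (a ⬝ᵥ a) * (b ⬝ᵥ b) - (a ⬝ᵥ b) * (a ⬝ᵥ b) with hgdef
  have hba : b ⬝ᵥ a = a ⬝ᵥ b := dotProduct_comm b a
  have hg : g ≠ 0 := by
    intro hg0
    set v : Fin 4 → ℝ := (b ⬝ᵥ b) • a - (a ⬝ᵥ b) • b with hv
    have hvv : v ⬝ᵥ v = 0 := by
      rw [hv]
      simp only [dotProduct_sub, sub_dotProduct, dotProduct_smul, smul_dotProduct,
        smul_eq_mul, hba]
      have hg0' : a ⬝ᵥ a * (b ⬝ᵥ b) - a ⬝ᵥ b * (a ⬝ᵥ b) = 0 := by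
        rw [← hgdef]; exact hg0
      linear_combination (b ⬝ᵥ b) * hg0'
    have hv0 : v = 0 := dotProduct_self_eq_zero.mp hvv
    have h1 := h (b ⬝ᵥ b) (-(a ⬝ᵥ b)) (by
      rw [neg_smul, ← sub_eq_add_neg, ← hv]
      exact hv0)
    have hb0 : b = 0 := dotProduct_self_eq_zero.mp h1.1
    have h2 := h 0 1 (by simp [hb0])
    exact one_ne_zero h2.2
  refine ⟨g⁻¹ • ((b ⬝ᵥ b) • a - (a ⬝ᵥ b) • b), g⁻¹ • ((a ⬝ᵥ a) • b - (a ⬝ᵥ b) • a),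
    ?_, ?_, ?_, ?_⟩ <;>
    simp only [dotProduct_smul, dotProduct_sub, smul_eq_mul, hba] <;>
    field_simp <;> ring

lemma polar_factor (a b c d u₀ u₁ : Fin 4 → ℝ)
    (ha0 : a ⬝ᵥ u₀ = 1) (hb0 : b ⬝ᵥ u₀ = 0) (ha1 : a ⬝ᵥ u₁ = 0) (hb1 : b ⬝ᵥ u₁ = 1)
    (hq : ∀ u, (a ⬝ᵥ u) * (c ⬝ᵥ u) + (b ⬝ᵥ u) * (d ⬝ᵥ u) = 0) :
    ∃ t : ℝ, c = t • b ∧ d = -t • a := by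
  have hpol : ∀ u v : Fin 4 → ℝ,
      (a ⬝ᵥ u) * (c ⬝ᵥ v) + (a ⬝ᵥ v) * (c ⬝ᵥ u) + (b ⬝ᵥ u) * (d ⬝ᵥ v)
        + (b ⬝ᵥ v) * (d ⬝ᵥ u) = 0 := by
    intro u v
    have h1 := hq (u + v)
    have h2 := hq u
    have h3 := hq v
    simp only [dotProduct_add] at h1
    linear_combination h1 - h2 - h3
  have hc0 : c ⬝ᵥ u₀ = 0 := by
    have := hq u₀; rw [ha0, hb0] at this; linarith
  have hd1 : d ⬝ᵥ u₁ = 0 := by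
    have := hq u₁; rw [ha1, hb1] at this; linarith
  have hc : ∀ u, c ⬝ᵥ u = -(d ⬝ᵥ u₀) * (b ⬝ᵥ u) := by
    intro u
    have := hpol u u₀; rw [ha0, hb0, hc0] at this; linear_combination this
  have hd : ∀ u, d ⬝ᵥ u = -(c ⬝ᵥ u₁) * (a ⬝ᵥ u) := by
    intro u
    have := hpol u u₁; rw [ha1, hb1, hd1] at this; linear_combination this
  have hct : c ⬝ᵥ u₁ = -(d ⬝ᵥ u₀) := by
    have := hc u₁; rw [hb1] at this; linarith
  refine ⟨-(d ⬝ᵥ u₀), ?_, ?_⟩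
  · funext k
    have := hc (Pi.single k 1)
    simpa [dotProduct_single] using this
  · funext k
    have := hd (Pi.single k 1)
    rw [hct] at this
    simpa [dotProduct_single] using this

lemma dot12 (x y : Fin 3 → ℝ) :
    x ⬝ᵥ ((!![0, 0, 0; 0, 1, 0; 0, 0, 1] : Matrix (Fin 3) (Fin 3) ℝ) *ᵥ y)
      = x 1 * y 1 + x 2 * y 2 := by
  have h : ∀ (M : Matrix (Fin 3) (Fin 3) ℝ) (y : Fin 3 → ℝ) (i : Fin 3),
      (M *ᵥ y) i = M i 0 * y 0 + M i 1 * y 1 + M i 2 * y 2 := by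
    intro M y i; simp [mulVec, dotProduct, Fin.sum_univ_three]
  simp only [dotProduct, Fin.sum_univ_three, h]
  norm_num [show (!![0, 0, 0; 0, 1, 0; 0, 0, 1] : Matrix (Fin 3) (Fin 3) ℝ) 0 0 = 0 from rfl,
    show (!![0, 0, 0; 0, 1, 0; 0, 0, 1] : Matrix (Fin 3) (Fin 3) ℝ) 0 1 = 0 from rfl,
    show (!![0, 0, 0; 0, 1, 0; 0, 0, 1] : Matrix (Fin 3) (Fin 3) ℝ) 0 2 = 0 from rfl,
    show (!![0, 0, 0; 0, 1, 0; 0, 0, 1] : Matrix (Fin 3) (Fin 3) ℝ) 1 0 = 0 from rfl,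
    show (!![0, 0, 0; 0, 1, 0; 0, 0, 1] : Matrix (Fin 3) (Fin 3) ℝ) 1 1 = 1 from rfl,
    show (!![0, 0, 0; 0, 1, 0; 0, 0, 1] : Matrix (Fin 3) (Fin 3) ℝ) 1 2 = 0 from rfl,
    show (!![0, 0, 0; 0, 1, 0; 0, 0, 1] : Matrix (Fin 3) (Fin 3) ℝ) 2 0 = 0 from rfl,
    show (!![0, 0, 0; 0, 1, 0; 0, 0, 1] : Matrix (Fin 3) (Fin 3) ℝ) 2 1 = 0 from rfl,
    show (!![0, 0, 0; 0, 1, 0; 0, 0, 1] : Matrix (Fin 3) (Fin 3) ℝ) 2 2 = 1 from rfl]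
  try ring

lemma dot13 (x y : Fin 3 → ℝ) :
    x ⬝ᵥ ((!![0, 0, 0; 0, 0, 1; 0, 1, 0] : Matrix (Fin 3) (Fin 3) ℝ) *ᵥ y)
      = x 1 * y 2 + x 2 * y 1 := by
  have h : ∀ (M : Matrix (Fin 3) (Fin 3) ℝ) (y : Fin 3 → ℝ) (i : Fin 3),
      (M *ᵥ y) i = M i 0 * y 0 + M i 1 * y 1 + M i 2 * y 2 := by
    intro M y i; simp [mulVec, dotProduct, Fin.sum_univ_three]
  simp only [dotProduct, Fin.sum_univ_three, h]
  norm_num [show (!![0, 0, 0; 0, 0, 1; 0, 1, 0] : Matrix (Fin 3) (Fin 3) ℝ) 0 0 = 0 from rfl,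
    show (!![0, 0, 0; 0, 0, 1; 0, 1, 0] : Matrix (Fin 3) (Fin 3) ℝ) 0 1 = 0 from rfl,
    show (!![0, 0, 0; 0, 0, 1; 0, 1, 0] : Matrix (Fin 3) (Fin 3) ℝ) 0 2 = 0 from rfl,
    show (!![0, 0, 0; 0, 0, 1; 0, 1, 0] : Matrix (Fin 3) (Fin 3) ℝ) 1 0 = 0 from rfl,
    show (!![0, 0, 0; 0, 0, 1; 0, 1, 0] : Matrix (Fin 3) (Fin 3) ℝ) 1 1 = 0 from rfl,
    show (!![0, 0, 0; 0, 0, 1; 0, 1, 0] : Matrix (Fin 3) (Fin 3) ℝ) 1 2 = 1 from rfl,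
    show (!![0, 0, 0; 0, 0, 1; 0, 1, 0] : Matrix (Fin 3) (Fin 3) ℝ) 2 0 = 0 from rfl,
    show (!![0, 0, 0; 0, 0, 1; 0, 1, 0] : Matrix (Fin 3) (Fin 3) ℝ) 2 1 = 1 from rfl,
    show (!![0, 0, 0; 0, 0, 1; 0, 1, 0] : Matrix (Fin 3) (Fin 3) ℝ) 2 2 = 0 from rfl]
  try ring

lemma dot23 (x y : Fin 3 → ℝ) :
    x ⬝ᵥ ((!![0, 0, 0; 0, 1, 1; 0, -1, 1] : Matrix (Fin 3) (Fin 3) ℝ) *ᵥ y)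
      = x 1 * (y 1 + y 2) + x 2 * (-(y 1) + y 2) := by
  have h : ∀ (M : Matrix (Fin 3) (Fin 3) ℝ) (y : Fin 3 → ℝ) (i : Fin 3),
      (M *ᵥ y) i = M i 0 * y 0 + M i 1 * y 1 + M i 2 * y 2 := by
    intro M y i; simp [mulVec, dotProduct, Fin.sum_univ_three]
  simp only [dotProduct, Fin.sum_univ_three, h]
  norm_num [show (!![0, 0, 0; 0, 1, 1; 0, -1, 1] : Matrix (Fin 3) (Fin 3) ℝ) 0 0 = 0 from rfl,
    show (!![0, 0, 0; 0, 1, 1; 0, -1, 1] : Matrix (Fin 3) (Fin 3) ℝ) 0 1 = 0 from rfl,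
    show (!![0, 0, 0; 0, 1, 1; 0, -1, 1] : Matrix (Fin 3) (Fin 3) ℝ) 0 2 = 0 from rfl,
    show (!![0, 0, 0; 0, 1, 1; 0, -1, 1] : Matrix (Fin 3) (Fin 3) ℝ) 1 0 = 0 from rfl,
    show (!![0, 0, 0; 0, 1, 1; 0, -1, 1] : Matrix (Fin 3) (Fin 3) ℝ) 1 1 = 1 from rfl,
    show (!![0, 0, 0; 0, 1, 1; 0, -1, 1] : Matrix (Fin 3) (Fin 3) ℝ) 1 2 = 1 from rfl,
    show (!![0, 0, 0; 0, 1, 1; 0, -1, 1] : Matrix (Fin 3) (Fin 3) ℝ) 2 0 = 0 from rfl,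
    show (!![0, 0, 0; 0, 1, 1; 0, -1, 1] : Matrix (Fin 3) (Fin 3) ℝ) 2 1 = -1 from rfl,
    show (!![0, 0, 0; 0, 1, 1; 0, -1, 1] : Matrix (Fin 3) (Fin 3) ℝ) 2 2 = 1 from rfl]
  try ring

lemma key_id (F : Matrix (Fin 3) (Fin 3) ℝ) (l : ℝ) (hl : l ≠ 0)
    (P Q : Matrix (Fin 3) (Fin 4) ℝ) (h : l • F = psi P Q) (u : Fin 4 → ℝ) :
    (P *ᵥ u) ⬝ᵥ (F *ᵥ (Q *ᵥ u)) = 0 := by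
  have h0 := psi_alt P Q u
  rw [← h, smul_mulVec, dotProduct_smul, smul_eq_mul] at h0
  exact (mul_eq_zero.mp h0).resolve_left hl

theorem stmt10' :
    ¬ ∃ (P₁ P₂ P₃ : Matrix (Fin 3) (Fin 4) ℝ) (l12 l13 l23 : ℝ),
        IsCamera P₁ ∧ IsCamera P₂ ∧ IsCamera P₃ ∧
        l12 ≠ 0 ∧ l13 ≠ 0 ∧ l23 ≠ 0 ∧
        l12 • (!![0, 0, 0; 0, 1, 0; 0, 0, 1] : Matrix (Fin 3) (Fin 3) ℝ) = psi P₁ P₂ ∧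
        l13 • (!![0, 0, 0; 0, 0, 1; 0, 1, 0] : Matrix (Fin 3) (Fin 3) ℝ) = psi P₁ P₃ ∧
        l23 • (!![0, 0, 0; 0, 1, 1; 0, -1, 1] : Matrix (Fin 3) (Fin 3) ℝ) = psi P₂ P₃ := by
  rintro ⟨P₁, P₂, P₃, l12, l13, l23, hP1, hP2, hP3, hl12, hl13, hl23, h12, h13, h23⟩
  have id1 : ∀ u, (P₁ 1 ⬝ᵥ u) * (P₂ 1 ⬝ᵥ u) + (P₁ 2 ⬝ᵥ u) * (P₂ 2 ⬝ᵥ u) = 0 := by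
    intro u
    have h := key_id _ _ hl12 _ _ h12 u
    rw [dot12] at h
    exact h
  have id2 : ∀ u, (P₁ 1 ⬝ᵥ u) * (P₃ 2 ⬝ᵥ u) + (P₁ 2 ⬝ᵥ u) * (P₃ 1 ⬝ᵥ u) = 0 := by
    intro u
    have h := key_id _ _ hl13 _ _ h13 u
    rw [dot13] at h
    exact h
  have id3 : ∀ u, (P₂ 1 ⬝ᵥ u) * ((P₃ 1 ⬝ᵥ u) + (P₃ 2 ⬝ᵥ u))
      + (P₂ 2 ⬝ᵥ u) * (-(P₃ 1 ⬝ᵥ u) + (P₃ 2 ⬝ᵥ u)) = 0 := by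
    intro u
    have h := key_id _ _ hl23 _ _ h23 u
    rw [dot23] at h
    exact h
  obtain ⟨u₀, u₁, ha0, hb0, ha1, hb1⟩ := dual_exists (P₁ 1) (P₁ 2) (rows12_indep P₁ hP1)
  obtain ⟨t, hc, hd⟩ := polar_factor (P₁ 1) (P₁ 2) (P₂ 1) (P₂ 2) u₀ u₁ ha0 hb0 ha1 hb1 id1
  obtain ⟨σ, hf, he⟩ := polar_factor (P₁ 1) (P₁ 2) (P₃ 2) (P₃ 1) u₀ u₁ ha0 hb0 ha1 hb1 id2
  have ht : t ≠ 0 := by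
    rintro rfl
    have hzero : P₂ 1 = 0 := by rw [hc]; simp
    have := (rows12_indep P₂ hP2 1 0 (by rw [hzero]; simp)).1
    norm_num at this
  have hσ : σ ≠ 0 := by
    rintro rfl
    have hzero : P₃ 2 = 0 := by rw [hf]; simp
    have := (rows12_indep P₃ hP3 0 1 (by rw [hzero]; simp)).2
    norm_num at this
  have hv1 : P₂ 1 ⬝ᵥ u₀ = 0 := by rw [hc, smul_dotProduct, hb0]; simp
  have hv2 : P₂ 2 ⬝ᵥ u₀ = -t := by rw [hd, smul_dotProduct, ha0]; simp
  have hv3 : P₃ 1 ⬝ᵥ u₀ = -σ := by rw [he, smul_dotProduct, ha0]; simp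
  have hv4 : P₃ 2 ⬝ᵥ u₀ = 0 := by rw [hf, smul_dotProduct, hb0]; simp
  have h0 := id3 u₀
  rw [hv1, hv2, hv3, hv4] at h0
  have : t * σ = 0 := by linear_combination -h0
  rcases mul_eq_zero.mp this with h | h
  · exact ht h
  · exact hσ h

/-- Example `ex:counterexample1`: a triple of rank-2 matrices whose
epipoles all equal `(1,0,0)` and which satisfy the triple-wise equations, yet which is
not compatible. -/
theorem stmt10 :
    let F12 : Matrix (Fin 3) (Fin 3) ℝ := !![0, 0, 0; 0, 1, 0; 0, 0, 1]
    let F13 : Matrix (Fin 3) (Fin 3) ℝ := !![0, 0, 0; 0, 0, 1; 0, 1, 0]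
    let F23 : Matrix (Fin 3) (Fin 3) ℝ := !![0, 0, 0; 0, 1, 1; 0, -1, 1]
    let e : Fin 3 → ℝ := ![1, 0, 0]
    F12.rank = 2 ∧ F13.rank = 2 ∧ F23.rank = 2 ∧
    (F12 *ᵥ e = 0 ∧ F12ᵀ *ᵥ e = 0) ∧
    (F13 *ᵥ e = 0 ∧ F13ᵀ *ᵥ e = 0) ∧
    (F23 *ᵥ e = 0 ∧ F23ᵀ *ᵥ e = 0) ∧
    (e ⬝ᵥ (F12 *ᵥ e) = 0 ∧ e ⬝ᵥ (F13 *ᵥ e) = 0 ∧ e ⬝ᵥ (F23 *ᵥ e) = 0) ∧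
    ¬ ∃ (P₁ P₂ P₃ : Matrix (Fin 3) (Fin 4) ℝ) (l12 l13 l23 : ℝ),
        IsCamera P₁ ∧ IsCamera P₂ ∧ IsCamera P₃ ∧
        l12 ≠ 0 ∧ l13 ≠ 0 ∧ l23 ≠ 0 ∧
        l12 • F12 = psi P₁ P₂ ∧ l13 • F13 = psi P₁ P₃ ∧ l23 • F23 = psi P₂ P₃ := by
  intro F12 F13 F23 e
  have hrank12 : (!![0, 0, 0; 0, 1, 0; 0, 0, 1] : Matrix (Fin 3) (Fin 3) ℝ).rank = 2 := by
    have h : (!![0, 0, 0; 0, 1, 0; 0, 0, 1] : Matrix (Fin 3) (Fin 3) ℝ) = diagonal ![0,1,1] := by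
      ext i j
      fin_cases i <;> fin_cases j <;> simp [diagonal] <;>
        norm_num [Matrix.vecHead, Matrix.vecTail]
    rw [h, rank_diagonal]
    have hmem : ∀ i : Fin 3, i ∈ ({1, 2} : Finset (Fin 3)) ↔ (![0,1,1] : Fin 3 → ℝ) i ≠ 0 := by
      intro i; fin_cases i <;> norm_num <;> decide
    rw [Fintype.card_of_subtype {1,2} hmem]
    decide
  refine ⟨hrank12, ?_, ?_, ⟨?_, ?_⟩, ⟨?_, ?_⟩, ⟨?_, ?_⟩, ⟨?_, ?_, ?_⟩, ?_⟩
  · show (!![0, 0, 0; 0, 0, 1; 0, 1, 0] : Matrix (Fin 3) (Fin 3) ℝ).rank = 2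
    have h : (!![0, 0, 0; 0, 0, 1; 0, 1, 0] : Matrix (Fin 3) (Fin 3) ℝ) =
        !![0, 0, 0; 0, 1, 0; 0, 0, 1] * !![1,0,0;0,0,1;0,1,0] := by
      ext i j; fin_cases i <;> fin_cases j <;> norm_num [Matrix.mul_apply, Fin.sum_univ_succ]
    rw [h, rank_mul_eq_left_of_isUnit_det]
    · exact hrank12
    · simp [det_fin_three]
  · show (!![0, 0, 0; 0, 1, 1; 0, -1, 1] : Matrix (Fin 3) (Fin 3) ℝ).rank = 2
    have h : (!![0, 0, 0; 0, 1, 1; 0, -1, 1] : Matrix (Fin 3) (Fin 3) ℝ) =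
        !![0, 0, 0; 0, 1, 0; 0, 0, 1] * !![1,0,0;0,1,1;0,-1,1] := by
      ext i j; fin_cases i <;> fin_cases j <;> norm_num [Matrix.mul_apply, Fin.sum_univ_succ]
    rw [h, rank_mul_eq_left_of_isUnit_det]
    · exact hrank12
    · simp [det_fin_three]
  · show (!![0, 0, 0; 0, 1, 0; 0, 0, 1] : Matrix (Fin 3) (Fin 3) ℝ) *ᵥ ![1,0,0] = 0
    funext i; fin_cases i <;> norm_num [mulVec, dotProduct, Fin.sum_univ_succ]
  · show (!![0, 0, 0; 0, 1, 0; 0, 0, 1] : Matrix (Fin 3) (Fin 3) ℝ)ᵀ *ᵥ ![1,0,0] = 0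
    funext i; fin_cases i <;> norm_num [mulVec, dotProduct, Fin.sum_univ_succ, transpose]
  · show (!![0, 0, 0; 0, 0, 1; 0, 1, 0] : Matrix (Fin 3) (Fin 3) ℝ) *ᵥ ![1,0,0] = 0
    funext i; fin_cases i <;> norm_num [mulVec, dotProduct, Fin.sum_univ_succ]
  · show (!![0, 0, 0; 0, 0, 1; 0, 1, 0] : Matrix (Fin 3) (Fin 3) ℝ)ᵀ *ᵥ ![1,0,0] = 0
    funext i; fin_cases i <;> norm_num [mulVec, dotProduct, Fin.sum_univ_succ, transpose]
  · show (!![0, 0, 0; 0, 1, 1; 0, -1, 1] : Matrix (Fin 3) (Fin 3) ℝ) *ᵥ ![1,0,0] = 0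
    funext i; fin_cases i <;> norm_num [mulVec, dotProduct, Fin.sum_univ_succ]
  · show (!![0, 0, 0; 0, 1, 1; 0, -1, 1] : Matrix (Fin 3) (Fin 3) ℝ)ᵀ *ᵥ ![1,0,0] = 0
    funext i; fin_cases i <;> norm_num [mulVec, dotProduct, Fin.sum_univ_succ, transpose]
  · show (![1,0,0] : Fin 3 → ℝ) ⬝ᵥ
        ((!![0, 0, 0; 0, 1, 0; 0, 0, 1] : Matrix (Fin 3) (Fin 3) ℝ) *ᵥ ![1,0,0]) = 0
    norm_num [mulVec, dotProduct, Fin.sum_univ_succ]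
  · show (![1,0,0] : Fin 3 → ℝ) ⬝ᵥ
        ((!![0, 0, 0; 0, 0, 1; 0, 1, 0] : Matrix (Fin 3) (Fin 3) ℝ) *ᵥ ![1,0,0]) = 0
    norm_num [mulVec, dotProduct, Fin.sum_univ_succ]
  · show (![1,0,0] : Fin 3 → ℝ) ⬝ᵥ
        ((!![0, 0, 0; 0, 1, 1; 0, -1, 1] : Matrix (Fin 3) (Fin 3) ℝ) *ᵥ ![1,0,0]) = 0
    norm_num [mulVec, dotProduct, Fin.sum_univ_succ]
  · exact stmt10'
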